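/- For every natural number n ≥ 1 there exists a family Σ of ⌈n/2⌉ linear orders on the set {0, 1, …, n−1} such that for all distinct i, j ∈ {0, …, n−1} there exists an order σ ∈ Σ in which i and j are adjacent, i.e., no element k ∈ {0, …, n−1} satisfies i ≺_σ k ≺_σ j or j ≺_σ k ≺_σ i. -/

import Mathlib

/-- offset of vertex `v` in the `k`-th zigzag path. -/
private def zigU (n k : ℕ) (v : Fin n) : ℕ :=
  ((v.val : ZMod n) - (k : ZMod n)).val

/-- position of vertex `v` in the `k`-th zigzag path `k, k-1, k+1, k-2, k+2, …`. -/
private def zigPos (n k : ℕ) (v : Fin n) : ℕ :=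
  if 2 * zigU n k v < n then 2 * zigU n k v else 2 * (n - zigU n k v) - 1

private lemma zigU_lt (n k : ℕ) [NeZero n] (v : Fin n) : zigU n k v < n :=
  ZMod.val_lt _

private lemma zigU_inj (n k : ℕ) [NeZero n] {v w : Fin n}
    (h : zigU n k v = zigU n k w) : v = w := by
  have h1 : ((v.val : ZMod n) - (k : ZMod n)) = ((w.val : ZMod n) - (k : ZMod n)) :=
    ZMod.val_injective _ h
  have h2 : (v.val : ZMod n) = (w.val : ZMod n) := sub_left_injective h1
  have h3 : ((v.val : ZMod n)).val = ((w.val : ZMod n)).val := by rw [h2]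
  rw [ZMod.val_cast_of_lt v.isLt, ZMod.val_cast_of_lt w.isLt] at h3
  exact Fin.ext h3

private lemma zigPos_inj (n k : ℕ) [NeZero n] {v w : Fin n}
    (h : zigPos n k v = zigPos n k w) : v = w := by
  have hv := zigU_lt n k v
  have hw := zigU_lt n k w
  apply zigU_inj n k
  unfold zigPos at h
  split_ifs at h <;> omega

private lemma mod_two_n (n a : ℕ) (h : a < 2 * n) :
    (a < n ∧ a % n = a) ∨ (n ≤ a ∧ a % n = a - n) := by
  rcases lt_or_ge a n with h1 | h1
  · exact Or.inl ⟨h1, Nat.mod_eq_of_lt h1⟩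
  · refine Or.inr ⟨h1, ?_⟩
    rw [Nat.mod_eq_sub_mod h1]
    exact Nat.mod_eq_of_lt (by omega)

/-- key arithmetic: for any distinct pair there is a path index in which
the two offsets sum to `n-1` or `n`. -/
private lemma exists_k (n : ℕ) (hn : 1 ≤ n) {i j : Fin n} (hij : i ≠ j) :
    ∃ k : ℕ, k < (n + 1) / 2 ∧
      (zigU n k i + zigU n k j = n - 1 ∨ zigU n k i + zigU n k j = n) := by
  haveI : NeZero n := ⟨by omega⟩
  set t := (i.val + j.val) % n with ht
  have htn : t < n := Nat.mod_lt _ (by omega)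
  have htc : (t : ZMod n) = (i.val : ZMod n) + (j.val : ZMod n) := by
    rw [ht]; push_cast [ZMod.natCast_mod]; ring
  refine ⟨if t % 2 = 0 then t / 2 else if t + 1 = n then 0 else (t + 1) / 2, ?_, ?_⟩
  · split_ifs <;> omega
  · set k : ℕ := if t % 2 = 0 then t / 2 else if t + 1 = n then 0 else (t + 1) / 2 with hk
    set a : ZMod n := (i.val : ZMod n) - (k : ZMod n) with ha
    set b : ZMod n := (j.val : ZMod n) - (k : ZMod n) with hb
    have hlti := zigU_lt n k i
    have hltj := zigU_lt n k j
    have hne : zigU n k i ≠ zigU n k j := fun h => hij (zigU_inj n k h)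
    have hval : (a + b).val = (zigU n k i + zigU n k j) % n := by
      rw [ZMod.val_add]; rfl
    by_cases hpar : t % 2 = 0
    · -- even case: 2k = t, so a + b = 0, sum of offsets = n
      right
      have h2k : ((2 * k : ℕ) : ZMod n) = (t : ZMod n) := by
        congr 1; simp only [hk, if_pos hpar]; omega
      have hab : a + b = 0 := by
        rw [ha, hb]
        push_cast at h2k
        rw [htc] at h2k
        linear_combination -h2k
      rw [hab, ZMod.val_zero] at hval
      have hz : zigU n k i + zigU n k j ≠ 0 := by
        intro h0; exact hne (by omega)
      rcases mod_two_n n (zigU n k i + zigU n k j) (by omega) with ⟨_, h⟩ | ⟨_, h⟩ <;> omega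
    · -- odd case: 2k ≡ t + 1, so a + b = -1, sum of offsets = n - 1
      left
      have h2k : ((2 * k : ℕ) : ZMod n) = ((t + 1 : ℕ) : ZMod n) := by
        by_cases hn1 : t + 1 = n
        · have hk0 : k = 0 := by simp only [hk, if_neg hpar, if_pos hn1]
          rw [hk0, hn1]
          simp [ZMod.natCast_self]
        · congr 1
          simp only [hk, if_neg hpar, if_neg hn1]
          omega
      have hneg : (-1 : ZMod n) = ((n - 1 : ℕ) : ZMod n) := by
        have hns : ((n : ℕ) : ZMod n) = 0 := ZMod.natCast_self n
        rw [Nat.cast_sub hn, hns]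
        push_cast
        ring
      have hab : a + b = -1 := by
        rw [ha, hb]
        push_cast at h2k
        rw [htc] at h2k
        linear_combination -h2k
      rw [hab, hneg, ZMod.val_cast_of_lt (by omega : n - 1 < n)] at hval
      rcases mod_two_n n (zigU n k i + zigU n k j) (by omega) with ⟨_, h⟩ | ⟨_, h⟩ <;> omega

private lemma adjacent_of_sum (n k : ℕ) [NeZero n] {i j : Fin n} (hij : i ≠ j)
    (h : zigU n k i + zigU n k j = n - 1 ∨ zigU n k i + zigU n k j = n) :
    zigPos n k i + 1 = zigPos n k j ∨ zigPos n k j + 1 = zigPos n k i := by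
  have hlti := zigU_lt n k i
  have hltj := zigU_lt n k j
  have hne : zigU n k i ≠ zigU n k j := fun h => hij (zigU_inj n k h)
  unfold zigPos
  split_ifs <;> omega

theorem exists_orderings_every_pair_adjacent (n : ℕ) (hn : 1 ≤ n) :
    ∃ σ : Fin ((n + 1) / 2) → (Fin n → Fin n → Prop),
      (∀ k, IsStrictTotalOrder (Fin n) (σ k)) ∧
      ∀ i j : Fin n, i ≠ j →
        ∃ k, ∀ l : Fin n,
          ¬(σ k i l ∧ σ k l j) ∧ ¬(σ k j l ∧ σ k l i) := by
  haveI : NeZero n := ⟨by omega⟩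
  refine ⟨fun k i j => zigPos n k.val i < zigPos n k.val j, ?_, ?_⟩
  · intro k
    exact {
      trichotomous := fun a b => by
        rcases lt_trichotomy (zigPos n k.val a) (zigPos n k.val b) with h | h | h
        · exact fun h1 _ => absurd h h1
        · exact fun _ _ => zigPos_inj n k.val h
        · exact fun _ h2 => absurd h h2
      irrefl := fun a => lt_irrefl _
      trans := fun a b c => Nat.lt_trans }
  · intro i j hij
    obtain ⟨k, hk, hsum⟩ := exists_k n hn hij
    have hadj := adjacent_of_sum n k hij hsum
    refine ⟨⟨k, hk⟩, fun l => ?_⟩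
    simp only
    omega
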